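/- Let K ≥ 1 and, for k = 1,…,K, let n_k ≥ 1 with m_k = C(n_k,2); set M = ∑_{k=1}^K m_k, assume M ≥ 1, and let N = max_k n_k. For each k and each edge index e ∈ {1,…,m_k} let V_{k,e} be a nonempty countable set, and let X = ∏_{k=1}^K ∏_{e=1}^{m_k} V_{k,e}. For arbitrary natural parameters η_k ∈ ℝ^{d_k} and statistics s_k : ∏_{e=1}^{m_k} V_{k,e} → ℝ^{d_k}, suppose w(x) := exp(∑_{k=1}^K ⟨η_k, s_k(x_k)⟩) is summable over X with sum Z, and let p(x) = w(x)/Z be the resulting exponential-family probability mass function with local dependence. If f : X → ℝ satisfies |f(x) − f(y)| ≤ L·d(x,y) for all x,y ∈ X, where L > 0 and d is the Hamming distance on the edge coordinates, then f is bounded, its expectation E f = ∑_x p(x)·f(x) is well defined, and for every t > 0, ∑_{x : |f(x) − E f| ≥ t} p(x) ≤ 2·exp(−t²/(2·L²·M·N⁴)). -/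

import Mathlib

open scoped BigOperators

namespace McD

lemma abs_tsum_le {α : Type*} {f : α → ℝ} (h : Summable fun a => |f a|) :
    |∑' a, f a| ≤ ∑' a, |f a| := by
  simpa [Real.norm_eq_abs] using
    norm_tsum_le_tsum_norm (f := f) (by simpa [Real.norm_eq_abs] using h)

lemma summable_mul_bounded {α : Type*} {P g : α → ℝ} (hP0 : ∀ a, 0 ≤ P a)
    (hPs : Summable P) {B : ℝ} (hg : ∀ a, |g a| ≤ B) :
    Summable fun a => P a * g a := by
  apply Summable.of_abs
  apply Summable.of_nonneg_of_le (fun a => abs_nonneg _) (fun a => ?_) (hPs.mul_right B)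
  rw [abs_mul, abs_of_nonneg (hP0 a)]
  exact mul_le_mul_of_nonneg_left (hg a) (hP0 a)

lemma tsum_mul_sub_le {α : Type*} {q u v : α → ℝ} (hq0 : ∀ a, 0 ≤ q a)
    (hqs : Summable q) (hq1 : ∑' a, q a = 1)
    (hsu : Summable fun a => q a * u a) (hsv : Summable fun a => q a * v a)
    {B : ℝ} (h : ∀ a, |u a - v a| ≤ B) :
    |(∑' a, q a * u a) - ∑' b, q b * v b| ≤ B := by
  rw [← Summable.tsum_sub hsu hsv]
  have h1 : ∀ a, q a * u a - q a * v a = q a * (u a - v a) := fun a => by ring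
  simp only [h1]
  have habs : ∀ a, |q a * (u a - v a)| ≤ q a * B := fun a => by
    rw [abs_mul, abs_of_nonneg (hq0 a)]
    exact mul_le_mul_of_nonneg_left (h a) (hq0 a)
  have hsabs : Summable fun a => |q a * (u a - v a)| :=
    Summable.of_nonneg_of_le (fun a => abs_nonneg _) habs (hqs.mul_right B)
  calc |∑' a, q a * (u a - v a)| ≤ ∑' a, |q a * (u a - v a)| := abs_tsum_le hsabs
    _ ≤ ∑' a, q a * B := Summable.tsum_le_tsum habs hsabs (hqs.mul_right B)
    _ = B := by rw [tsum_mul_right, hq1, one_mul]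

lemma mean_dev {α : Type*} {q g : α → ℝ} (hq0 : ∀ a, 0 ≤ q a)
    (hqs : Summable q) (hq1 : ∑' a, q a = 1)
    {B : ℝ} (hg : ∀ a b, |g a - g b| ≤ B)
    (hsg : Summable fun a => q a * g a) (a : α) :
    |g a - ∑' b, q b * g b| ≤ B := by
  have h1 : g a = ∑' b, q b * g a := by rw [tsum_mul_right, hq1, one_mul]
  rw [h1]
  exact tsum_mul_sub_le hq0 hqs hq1 (hqs.mul_right (g a)) hsg (fun b => hg a b)

lemma tsum_mul_abs_le {α : Type*} {q g : α → ℝ} (hq0 : ∀ a, 0 ≤ q a)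
    (hqs : Summable q) (hq1 : ∑' a, q a = 1)
    {B : ℝ} (hg : ∀ a, |g a| ≤ B) :
    |∑' a, q a * g a| ≤ B := by
  have hsg : Summable fun a => q a * g a := summable_mul_bounded hq0 hqs hg
  have h0 : (∑' a : α, q a * (0:ℝ)) = 0 := by simp
  have := tsum_mul_sub_le hq0 hqs hq1 hsg (v := fun _ => 0) (by simpa using hqs.mul_right 0)
    (B := B) (fun a => by simpa using hg a)
  simpa [h0] using this

lemma convex_exp_bound {d c l : ℝ} (hc : 0 < c) (hd1 : -c ≤ d) (hd2 : d ≤ c) :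
    Real.exp (l * d) ≤ Real.cosh (l * c) + d * (Real.sinh (l * c) / c) := by
  have hcne : c ≠ 0 := ne_of_gt hc
  have hA0 : (0:ℝ) ≤ (d + c) / (2 * c) := by apply div_nonneg <;> linarith
  have hB0 : (0:ℝ) ≤ (c - d) / (2 * c) := by apply div_nonneg <;> linarith
  have hAB : (d + c) / (2 * c) + (c - d) / (2 * c) = 1 := by field_simp; ring
  have key := convexOn_exp.2 (Set.mem_univ (l * c)) (Set.mem_univ (-(l * c))) hA0 hB0 hAB
  have harg : ((d + c) / (2 * c)) • (l * c) + ((c - d) / (2 * c)) • (-(l * c)) = l * d := by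
    simp only [smul_eq_mul]
    field_simp
    ring
  rw [harg] at key
  calc Real.exp (l * d) ≤ ((d + c) / (2 * c)) • Real.exp (l * c)
        + ((c - d) / (2 * c)) • Real.exp (-(l * c)) := key
    _ = Real.cosh (l * c) + d * (Real.sinh (l * c) / c) := by
        rw [Real.cosh_eq, Real.sinh_eq]
        simp only [smul_eq_mul]
        field_simp
        ring

/-- Single-variable sub-Gaussian (Hoeffding-type) mgf bound. -/
lemma hoeffding_step {α : Type*} {q : α → ℝ} (hq0 : ∀ a, 0 ≤ q a) (hqs : Summable q)
    (hq1 : ∑' a, q a = 1) {g : α → ℝ} {c : ℝ} (hc : 0 ≤ c)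
    (hg : ∀ a b, |g a - g b| ≤ c) (l : ℝ) :
    ∑' a, q a * Real.exp (l * (g a - ∑' b, q b * g b)) ≤ Real.exp (l ^ 2 * c ^ 2 / 2) := by
  classical
  by_cases hα : Nonempty α
  case neg =>
    have : IsEmpty α := not_nonempty_iff.mp hα
    rw [tsum_empty]
    positivity
  obtain ⟨a₀⟩ := hα
  have hgb : ∀ a, |g a| ≤ |g a₀| + c := fun a => by
    calc |g a| = |g a - g a₀ + g a₀| := by ring_nf
      _ ≤ |g a - g a₀| + |g a₀| := abs_add_le _ _
      _ ≤ c + |g a₀| := add_le_add (hg a a₀) le_rfl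
      _ = |g a₀| + c := by ring
  have hsg : Summable fun a => q a * g a := summable_mul_bounded hq0 hqs hgb
  set μ := ∑' b, q b * g b with hμ
  have hd : ∀ a, |g a - μ| ≤ c := mean_dev hq0 hqs hq1 hg hsg
  have hexpb : ∀ a, |Real.exp (l * (g a - μ))| ≤ Real.exp (|l| * c) := fun a => by
    rw [abs_of_pos (Real.exp_pos _)]
    apply Real.exp_le_exp.mpr
    calc l * (g a - μ) ≤ |l * (g a - μ)| := le_abs_self _
      _ = |l| * |g a - μ| := abs_mul _ _
      _ ≤ |l| * c := mul_le_mul_of_nonneg_left (hd a) (abs_nonneg _)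
  have hsl : Summable fun a => q a * Real.exp (l * (g a - μ)) :=
    summable_mul_bounded hq0 hqs hexpb
  rcases eq_or_lt_of_le hc with hc0 | hcpos
  · have hz : ∀ a, g a - μ = 0 := fun a => by
      have := hd a; rw [← hc0] at this
      exact abs_eq_zero.mp (le_antisymm this (abs_nonneg _))
    calc ∑' a, q a * Real.exp (l * (g a - μ)) = ∑' a, q a := by
          apply tsum_congr; intro a; rw [hz a]; simp
      _ = 1 := hq1
      _ ≤ _ := Real.one_le_exp (by positivity)
  · set u := l * c with hu
    have hcne : c ≠ 0 := ne_of_gt hcpos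
    have hptw : ∀ a, Real.exp (l * (g a - μ)) ≤
        Real.cosh u + (g a - μ) * (Real.sinh u / c) := fun a =>
      convex_exp_bound hcpos (neg_le_of_abs_le (hd a)) (le_of_abs_le (hd a))
    have hsd : Summable fun a => q a * (g a - μ) := summable_mul_bounded hq0 hqs hd
    have hrhs : Summable fun a => q a * (Real.cosh u + (g a - μ) * (Real.sinh u / c)) := by
      have : (fun a => q a * (Real.cosh u + (g a - μ) * (Real.sinh u / c)))
          = fun a => q a * Real.cosh u + (q a * (g a - μ)) * (Real.sinh u / c) := by
        funext a; ring
      rw [this]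
      exact (hqs.mul_right _).add (hsd.mul_right _)
    have hzero : (∑' a, q a * (g a - μ)) = 0 := by
      have : (fun a => q a * (g a - μ)) = fun a => q a * g a - q a * μ := by
        funext a; ring
      rw [this, Summable.tsum_sub hsg (hqs.mul_right μ), tsum_mul_right, hq1, one_mul, sub_self]
    calc ∑' a, q a * Real.exp (l * (g a - μ))
        ≤ ∑' a, q a * (Real.cosh u + (g a - μ) * (Real.sinh u / c)) :=
          Summable.tsum_le_tsum (fun a => mul_le_mul_of_nonneg_left (hptw a) (hq0 a)) hsl hrhs
      _ = (∑' a, q a) * Real.cosh u + (∑' a, q a * (g a - μ)) * (Real.sinh u / c) := by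
          have : (fun a => q a * (Real.cosh u + (g a - μ) * (Real.sinh u / c)))
              = fun a => q a * Real.cosh u + (q a * (g a - μ)) * (Real.sinh u / c) := by
            funext a; ring
          rw [this, Summable.tsum_add (hqs.mul_right _) (hsd.mul_right _), tsum_mul_right,
            tsum_mul_right]
      _ = Real.cosh u := by rw [hq1, hzero]; ring
      _ ≤ Real.exp (u ^ 2 / 2) := Real.cosh_le_exp_half_sq u
      _ = Real.exp (l ^ 2 * c ^ 2 / 2) := by rw [hu]; ring_nf

lemma tsum_pi_prod : ∀ (K : ℕ) (Y : Fin K → Type) [∀ k, Countable (Y k)]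
    [∀ k, Nonempty (Y k)] (g : ∀ k, Y k → ℝ),
    (∀ k y, 0 ≤ g k y) → (∀ k, Summable (g k)) →
    Summable (fun x : ∀ k, Y k => ∏ k, g k (x k)) ∧
    (∑' x : ∀ k, Y k, ∏ k, g k (x k)) = ∏ k, ∑' y, g k y := by
  intro K
  induction K with
  | zero =>
    intro Y _ _ g _ _
    constructor
    · exact Summable.of_finite
    · simp
  | succ K ih =>
    intro Y _ _ g hg0 hgs
    have ihs := ih (fun i => Y i.succ) (fun i => g i.succ) (fun i y => hg0 i.succ y)
      (fun i => hgs i.succ)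
    set P' : (∀ i : Fin K, Y i.succ) → ℝ := fun z => ∏ i, g i.succ (z i) with hP'
    have hP'0 : ∀ z, 0 ≤ P' z := fun z => Finset.prod_nonneg fun i _ => hg0 _ _
    have hprodsum : Summable (fun p : Y 0 × (∀ i : Fin K, Y i.succ) => g 0 p.1 * P' p.2) :=
      (hgs 0).mul_of_nonneg ihs.1 (fun y => hg0 0 y) hP'0
    have hcomp : ∀ p : Y 0 × (∀ i : Fin K, Y i.succ),
        (∏ k, g k ((Fin.consEquiv Y) p k)) = g 0 p.1 * P' p.2 := by
      intro p
      rw [Fin.prod_univ_succ]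
      simp [Fin.consEquiv]
      left; rfl
    have hsum2 : Summable (fun x : ∀ k, Y k => ∏ k, g k (x k)) := by
      rw [← (Fin.consEquiv Y).summable_iff]
      exact Summable.congr hprodsum (fun p => (hcomp p).symm)
    refine ⟨hsum2, ?_⟩
    rw [← (Fin.consEquiv Y).tsum_eq (fun x => ∏ k, g k (x k))]
    calc (∑' p : Y 0 × (∀ i : Fin K, Y i.succ), ∏ k, g k ((Fin.consEquiv Y) p k))
        = ∑' p : Y 0 × (∀ i : Fin K, Y i.succ), g 0 p.1 * P' p.2 := tsum_congr hcomp
      _ = ∑' a, ∑' z, g 0 a * P' z := Summable.tsum_prod hprodsum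
      _ = ∑' a, g 0 a * ∑' z, P' z := by
          apply tsum_congr; intro a; exact tsum_mul_left
      _ = (∑' a, g 0 a) * ∑' z, P' z := tsum_mul_right
      _ = ∏ k, ∑' y, g k y := by rw [ihs.2, Fin.prod_univ_succ]

lemma osc_le {K : ℕ} {Y : Fin K → Type} {f : (∀ k, Y k) → ℝ} {c : Fin K → ℝ}
    (hf : ∀ (x : ∀ k, Y k) k y, |f x - f (Function.update x k y)| ≤ c k)
    (x y : ∀ k, Y k) : |f x - f y| ≤ ∑ k, c k := by
  classical
  have key : ∀ s : Finset (Fin K),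
      |f x - f (fun k => if k ∈ s then y k else x k)| ≤ ∑ k ∈ s, c k := by
    intro s
    induction s using Finset.induction_on with
    | empty => simp
    | @insert a s ha ih =>
      have hupd : (fun k => if k ∈ insert a s then y k else x k)
          = Function.update (fun k => if k ∈ s then y k else x k) a (y a) := by
        funext k
        by_cases hk : k = a
        · subst hk; simp [Function.update_self]
        · simp [Function.update_of_ne hk, hk, Finset.mem_insert]
      rw [hupd, Finset.sum_insert ha]
      calc |f x - f (Function.update (fun k => if k ∈ s then y k else x k) a (y a))|
          ≤ |f x - f (fun k => if k ∈ s then y k else x k)|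
            + |f (fun k => if k ∈ s then y k else x k)
              - f (Function.update (fun k => if k ∈ s then y k else x k) a (y a))| :=
            abs_sub_le _ _ _
        _ ≤ (∑ k ∈ s, c k) + c a := add_le_add ih (hf _ a (y a))
        _ = c a + ∑ k ∈ s, c k := by ring
  have := key Finset.univ
  simpa using this

/-- Tensorization: sub-Gaussian mgf bound for functions of independent variables with
bounded coordinate-wise differences (McDiarmid mgf bound). -/
lemma tensor : ∀ (K : ℕ) (Y : Fin K → Type) [∀ k, Countable (Y k)] [∀ k, Nonempty (Y k)]
    (q : ∀ k, Y k → ℝ), (∀ k y, 0 ≤ q k y) → (∀ k, Summable (q k)) →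
    (∀ k, ∑' y, q k y = 1) →
    ∀ (f : (∀ k, Y k) → ℝ) (c : Fin K → ℝ), (∀ k, 0 ≤ c k) →
    (∀ x k y, |f x - f (Function.update x k y)| ≤ c k) → ∀ (l : ℝ),
    ∑' x, (∏ k, q k (x k)) * Real.exp (l * (f x - ∑' z, (∏ k, q k (z k)) * f z)) ≤
      Real.exp (l ^ 2 * (∑ k, c k ^ 2) / 2) := by
  intro K
  induction K with
  | zero =>
    intro Y _ _ q hq0 hqs hq1 f c hc hf l
    have hts : ∀ G : (∀ k : Fin 0, Y k) → ℝ, (∑' x, G x) = G default :=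
      fun G => tsum_eq_single default (fun b hb => absurd (Unique.eq_default b) hb)
    rw [hts, hts]
    simp
  | succ K ih =>
    intro Y instC instN q hq0 hqs hq1 f c hc hf l
    classical
    haveI : Nonempty (∀ k, Y k) := ⟨fun k => Classical.arbitrary _⟩
    set W := ∀ i : Fin K, Y i.succ with hWdef
    set P' : W → ℝ := fun z => ∏ i, q i.succ (z i) with hP'def
    set P : (∀ k, Y k) → ℝ := fun x => ∏ k, q k (x k) with hPdef
    have hP0 : ∀ x, 0 ≤ P x := fun x => Finset.prod_nonneg fun k _ => hq0 _ _
    have hP'0 : ∀ z, 0 ≤ P' z := fun z => Finset.prod_nonneg fun i _ => hq0 _ _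
    obtain ⟨hP's, hP't⟩ := tsum_pi_prod K (fun i => Y i.succ) (fun i => q i.succ)
      (fun i y => hq0 _ _) (fun i => hqs _)
    have hP'1 : (∑' z, P' z) = 1 := by
      rw [hP't]
      simp [hq1]
    -- bounds on f
    have hosc : ∀ x y, |f x - f y| ≤ ∑ k, c k := osc_le hf
    obtain ⟨x₀⟩ : Nonempty (∀ k, Y k) := inferInstance
    set Bf : ℝ := |f x₀| + ∑ k, c k with hBfdef
    have hfb : ∀ x, |f x| ≤ Bf := fun x => by
      calc |f x| = |f x - f x₀ + f x₀| := by ring_nf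
        _ ≤ |f x - f x₀| + |f x₀| := abs_add_le _ _
        _ ≤ (∑ k, c k) + |f x₀| := add_le_add (hosc x x₀) le_rfl
        _ = Bf := by rw [hBfdef]; ring
    -- conditional expectation over the first coordinate
    set F : W → ℝ := fun z => ∑' a, q 0 a * f (Fin.cons a z) with hFdef
    have hcons_s : ∀ z : W, Summable fun a => q 0 a * f (Fin.cons a z) := fun z =>
      summable_mul_bounded (hq0 0) (hqs 0) (fun a => hfb _)
    have hoscz : ∀ (z : W) (a b : Y 0), |f (Fin.cons a z) - f (Fin.cons b z)| ≤ c 0 := by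
      intro z a b
      have h1 : Fin.cons b z = Function.update (Fin.cons a z) 0 b :=
        (Fin.update_cons_zero a z b).symm
      rw [h1]
      exact hf _ 0 b
    have hFz : ∀ (z : W) (a : Y 0), |f (Fin.cons a z) - F z| ≤ c 0 := fun z a =>
      mean_dev (hq0 0) (hqs 0) (hq1 0) (hoscz z) (hcons_s z) a
    have hFupd : ∀ (z : W) (i : Fin K) (y : Y i.succ),
        |F z - F (Function.update z i y)| ≤ c i.succ := by
      intro z i y
      apply tsum_mul_sub_le (hq0 0) (hqs 0) (hq1 0) (hcons_s z) (hcons_s _)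
      intro a
      have h1 : Fin.cons a (Function.update z i y)
          = Function.update (Fin.cons a z) i.succ y := Fin.cons_update a z i y
      rw [h1]
      exact hf _ i.succ y
    have hFosc : ∀ z z' : W, |F z - F z'| ≤ ∑ i : Fin K, c i.succ := osc_le hFupd
    have hFb : ∀ z, |F z| ≤ Bf := fun z =>
      tsum_mul_abs_le (hq0 0) (hqs 0) (hq1 0) (fun a => hfb _)
    have hsF : Summable fun z => P' z * F z := summable_mul_bounded hP'0 hP's hFb
    -- rewriting tsums over the product decomposition
    have hXsum : ∀ G : (∀ k, Y k) → ℝ,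
        (∑' x, G x) = ∑' r : W × Y 0, G (Fin.cons r.2 r.1) := by
      intro G
      rw [← (Fin.consEquiv Y).tsum_eq G,
        ← (Equiv.prodComm W (Y 0)).tsum_eq (fun p => G (Fin.consEquiv Y p))]
      rfl
    have hPcons : ∀ (a : Y 0) (z : W), P (Fin.cons a z) = q 0 a * P' z := by
      intro a z
      show (∏ k, q k (Fin.cons a z k)) = q 0 a * ∏ i, q i.succ (z i)
      rw [Fin.prod_univ_succ]
      simp
    have hprod_base : Summable (fun r : W × Y 0 => P' r.1 * q 0 r.2) :=
      hP's.mul_of_nonneg (hqs 0) hP'0 (hq0 0)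
    have hprod_base0 : ∀ r : W × Y 0, 0 ≤ P' r.1 * q 0 r.2 :=
      fun r => mul_nonneg (hP'0 _) (hq0 0 _)
    -- Fubini for the mean
    set μ := ∑' z : (∀ k, Y k), P z * f z with hμdef
    have hFub : μ = ∑' z, P' z * F z := by
      rw [hμdef, hXsum (fun x => P x * f x)]
      have h1 : ∀ r : W × Y 0, P (Fin.cons r.2 r.1) * f (Fin.cons r.2 r.1)
          = (P' r.1 * q 0 r.2) * f (Fin.cons r.2 r.1) := fun r => by rw [hPcons]; ring
      rw [tsum_congr h1]
      have hsummable : Summable fun r : W × Y 0 => (P' r.1 * q 0 r.2) * f (Fin.cons r.2 r.1) :=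
        summable_mul_bounded hprod_base0 hprod_base (fun r => hfb _)
      rw [Summable.tsum_prod hsummable]
      apply tsum_congr; intro z
      have h2 : ∀ a : Y 0, (P' z * q 0 a) * f (Fin.cons a z)
          = P' z * (q 0 a * f (Fin.cons a z)) := fun a => by ring
      rw [tsum_congr h2, tsum_mul_left]
    -- exp bound helper
    have hexple : ∀ (v B : ℝ), |v| ≤ B → Real.exp (l * v) ≤ Real.exp (|l| * B) := by
      intro v B hv
      apply Real.exp_le_exp.mpr
      calc l * v ≤ |l * v| := le_abs_self _
        _ = |l| * |v| := abs_mul _ _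
        _ ≤ |l| * B := mul_le_mul_of_nonneg_left hv (abs_nonneg _)
    set B' : ℝ := ∑ i : Fin K, c i.succ with hB'def
    have hFdev : ∀ z, |F z - μ| ≤ B' := by
      intro z
      rw [hFub]
      exact mean_dev hP'0 hP's hP'1 hFosc hsF z
    set C1 : ℝ := Real.exp (|l| * B') with hC1def
    set C2 : ℝ := Real.exp (|l| * c 0) with hC2def
    set E0 : ℝ := Real.exp (l ^ 2 * c 0 ^ 2 / 2) with hE0def
    -- the inner (first-coordinate) mgf
    have hGz : ∀ z : W, (∑' a, q 0 a * Real.exp (l * (f (Fin.cons a z) - F z))) ≤ E0 :=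
      fun z => hoeffding_step (hq0 0) (hqs 0) (hq1 0) (hc 0) (hoscz z) l
    have hGz0 : ∀ z : W, 0 ≤ ∑' a, q 0 a * Real.exp (l * (f (Fin.cons a z) - F z)) :=
      fun z => tsum_nonneg fun a => mul_nonneg (hq0 0 a) (Real.exp_pos _).le
    -- main computation
    show (∑' x, P x * Real.exp (l * (f x - μ))) ≤ Real.exp (l ^ 2 * (∑ k, c k ^ 2) / 2)
    rw [hXsum (fun x => P x * Real.exp (l * (f x - μ)))]
    have hpt : ∀ r : W × Y 0,
        P (Fin.cons r.2 r.1) * Real.exp (l * (f (Fin.cons r.2 r.1) - μ))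
        = (P' r.1 * Real.exp (l * (F r.1 - μ)))
          * (q 0 r.2 * Real.exp (l * (f (Fin.cons r.2 r.1) - F r.1))) := by
      intro r
      rw [hPcons]
      have h3 : l * (f (Fin.cons r.2 r.1) - μ)
          = l * (F r.1 - μ) + l * (f (Fin.cons r.2 r.1) - F r.1) := by ring
      rw [h3, Real.exp_add]
      ring
    rw [tsum_congr hpt]
    have hsum2 : Summable (fun r : W × Y 0 =>
        (P' r.1 * Real.exp (l * (F r.1 - μ)))
          * (q 0 r.2 * Real.exp (l * (f (Fin.cons r.2 r.1) - F r.1)))) := by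
      apply Summable.congr (f := fun r : W × Y 0 =>
        (P' r.1 * q 0 r.2) * (Real.exp (l * (F r.1 - μ))
          * Real.exp (l * (f (Fin.cons r.2 r.1) - F r.1))))
      · apply summable_mul_bounded hprod_base0 hprod_base (B := C1 * C2)
        intro r
        rw [abs_mul, abs_of_pos (Real.exp_pos _), abs_of_pos (Real.exp_pos _)]
        exact mul_le_mul (hexple _ _ (hFdev r.1)) (hexple _ _ (hFz r.1 r.2))
          (Real.exp_pos _).le (Real.exp_pos _).le
      · intro r; ring
    rw [Summable.tsum_prod hsum2]
    have hinner : ∀ z : W,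
        (∑' a, (P' z * Real.exp (l * (F z - μ)))
          * (q 0 a * Real.exp (l * (f (Fin.cons a z) - F z))))
        = (P' z * Real.exp (l * (F z - μ)))
          * ∑' a, q 0 a * Real.exp (l * (f (Fin.cons a z) - F z)) :=
      fun z => tsum_mul_left
    rw [tsum_congr hinner]
    -- compare with the z-marginal mgf
    have hlhs_s : Summable (fun z : W => (P' z * Real.exp (l * (F z - μ)))
        * ∑' a, q 0 a * Real.exp (l * (f (Fin.cons a z) - F z))) := by
      apply Summable.of_nonneg_of_le
        (fun z => mul_nonneg (mul_nonneg (hP'0 z) (Real.exp_pos _).le) (hGz0 z))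
        (fun z => ?_) (hP's.mul_right (C1 * E0))
      calc (P' z * Real.exp (l * (F z - μ)))
            * ∑' a, q 0 a * Real.exp (l * (f (Fin.cons a z) - F z))
          ≤ (P' z * Real.exp (l * (F z - μ))) * E0 :=
            mul_le_mul_of_nonneg_left (hGz z)
              (mul_nonneg (hP'0 z) (Real.exp_pos _).le)
        _ ≤ (P' z * C1) * E0 := by
            apply mul_le_mul_of_nonneg_right _ (Real.exp_pos _).le
            exact mul_le_mul_of_nonneg_left (hexple _ _ (hFdev z)) (hP'0 z)
        _ = P' z * (C1 * E0) := by ring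
    have hrhs_s : Summable (fun z : W => (P' z * Real.exp (l * (F z - μ))) * E0) := by
      apply Summable.mul_right
      exact summable_mul_bounded hP'0 hP's
        (fun z => by
          rw [abs_of_pos (Real.exp_pos _)]; exact hexple _ _ (hFdev z))
    -- the induction hypothesis
    have ihF := ih (fun i => Y i.succ) (fun i => q i.succ) (fun i y => hq0 _ _)
      (fun i => hqs _) (fun i => hq1 _) F (fun i => c i.succ) (fun i => hc _) hFupd l
    have ihF' : (∑' z, P' z * Real.exp (l * (F z - μ)))
        ≤ Real.exp (l ^ 2 * (∑ i : Fin K, c i.succ ^ 2) / 2) := by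
      have h4 : (∑' z' : W, P' z' * F z') = μ := hFub.symm
      rw [← h4]
      exact ihF
    calc (∑' z : W, (P' z * Real.exp (l * (F z - μ)))
          * ∑' a, q 0 a * Real.exp (l * (f (Fin.cons a z) - F z)))
        ≤ ∑' z : W, (P' z * Real.exp (l * (F z - μ))) * E0 :=
          Summable.tsum_le_tsum (fun z => mul_le_mul_of_nonneg_left (hGz z)
            (mul_nonneg (hP'0 z) (Real.exp_pos _).le)) hlhs_s hrhs_s
      _ = (∑' z, P' z * Real.exp (l * (F z - μ))) * E0 := tsum_mul_right
      _ ≤ Real.exp (l ^ 2 * (∑ i : Fin K, c i.succ ^ 2) / 2) * E0 :=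
          mul_le_mul_of_nonneg_right ihF' (Real.exp_pos _).le
      _ = Real.exp (l ^ 2 * (∑ k, c k ^ 2) / 2) := by
          rw [hE0def, ← Real.exp_add]
          congr 1
          rw [Fin.sum_univ_succ]
          ring

end McD

/-- The sample space of within-neighborhood edge variables: `K` neighborhoods of
sizes `n k`, neighborhood `k` carrying `C(n k, 2)` edge variables with countable
state spaces `V k e`. -/
abbrev Cfg0 (K : ℕ) (n : Fin K → ℕ)
    (V : (k : Fin K) → Fin (Nat.choose (n k) 2) → Type) : Type :=
  (k : Fin K) → (e : Fin (Nat.choose (n k) 2)) → V k e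

/-- Proposition 1 of the paper, with the unspecified constant instantiated as `2`:
concentration of Hamming–Lipschitz functions of a random graph drawn from an
exponential-family pmf with local dependence on countable state spaces.  If
`|f(x) − f(y)| ≤ L·d(x,y)` for the Hamming distance `d`, then `f` is bounded, its
expectation is well defined, and
`P(|f(X) − E f| ≥ t) ≤ 2·exp(−t²/(2·L²·M·N⁴))` for every `t > 0`, where
`M = ∑_k C(n_k,2)` and `N = max_k n_k`. -/
theorem statement0
    (K : ℕ) (hK : 1 ≤ K)
    (n : Fin K → ℕ) (hn : ∀ k, 1 ≤ n k)
    (hM : 1 ≤ ∑ k, Nat.choose (n k) 2)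
    (N : ℕ) (hNub : ∀ k, n k ≤ N) (hNmem : ∃ k, n k = N)
    (V : (k : Fin K) → Fin (Nat.choose (n k) 2) → Type)
    [∀ k e, Countable (V k e)] [∀ k e, Nonempty (V k e)]
    [∀ k e, DecidableEq (V k e)]
    (dk : Fin K → ℕ)
    (η : (k : Fin K) → Fin (dk k) → ℝ)
    (s : (k : Fin K) → ((e : Fin (Nat.choose (n k) 2)) → V k e) → Fin (dk k) → ℝ)
    (w : Cfg0 K n V → ℝ)
    (hw : ∀ x, w x = Real.exp (∑ k, ∑ i, η k i * s k (x k) i))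
    (hwsum : Summable w)
    (Z : ℝ) (hZ : Z = ∑' x, w x)
    (p : Cfg0 K n V → ℝ) (hp : ∀ x, p x = w x / Z)
    (f : Cfg0 K n V → ℝ)
    (L : ℝ) (hL : 0 < L)
    (hf : ∀ x y : Cfg0 K n V,
      |f x - f y| ≤
        L * ∑ k, (((Finset.univ.filter (fun e => x k e ≠ y k e)).card : ℝ))) :
    (∃ Bd : ℝ, ∀ x, |f x| ≤ Bd) ∧
    Summable (fun x => p x * f x) ∧
    ∀ t : ℝ, 0 < t →
      (∑' x : {x : Cfg0 K n V // t ≤ |f x - ∑' y, p y * f y|}, p x.1) ≤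
        2 * Real.exp (-(t ^ 2) /
          (2 * L ^ 2 * (∑ k, ((Nat.choose (n k) 2 : ℝ))) * (N : ℝ) ^ 4)) := by
  classical
  set Y : Fin K → Type := fun k => (e : Fin (Nat.choose (n k) 2)) → V k e with hYdef
  haveI : ∀ k, Countable (Y k) := fun k => inferInstanceAs (Countable _)
  haveI : ∀ k, Nonempty (Y k) := fun k => inferInstanceAs (Nonempty _)
  haveI : Nonempty (Cfg0 K n V) := ⟨fun k e => Classical.arbitrary _⟩
  set m : Fin K → ℕ := fun k => Nat.choose (n k) 2 with hmdef
  set g : ∀ k, Y k → ℝ := fun k y => Real.exp (∑ i, η k i * s k y i) with hgdef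
  have hg_pos : ∀ k y, 0 < g k y := fun k y => Real.exp_pos _
  have hwprod : ∀ x, w x = ∏ k, g k (x k) := fun x => by
    rw [hw x, Real.exp_sum]
  obtain ⟨x₀⟩ : Nonempty (Cfg0 K n V) := inferInstance
  -- summability of each factor
  have hgsum : ∀ k, Summable (g k) := by
    intro k
    have hinj : Function.Injective (fun y : Y k => Function.update x₀ k y) := by
      intro y y' h
      have h2 := congrFun h k
      simpa using h2
    have hcomp : Summable (fun y : Y k => w (Function.update x₀ k y)) :=
      hwsum.comp_injective hinj
    set Ck : ℝ := ∏ j ∈ Finset.univ.erase k, g j (x₀ j) with hCkdef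
    have hCk_pos : 0 < Ck := Finset.prod_pos fun j _ => hg_pos j _
    have heval : ∀ y : Y k, w (Function.update x₀ k y) = g k y * Ck := by
      intro y
      rw [hwprod, ← Finset.mul_prod_erase Finset.univ _ (Finset.mem_univ k)]
      congr 1
      · rw [Function.update_self]
      · apply Finset.prod_congr rfl
        intro j hj
        rw [Function.update_of_ne (Finset.ne_of_mem_erase hj)]
    have hgc : Summable fun y : Y k => g k y * Ck := hcomp.congr heval
    have := hgc.mul_right Ck⁻¹
    apply this.congr
    intro y
    field_simp
  have hZk_pos : ∀ k, 0 < ∑' y, g k y := fun k =>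
    Summable.tsum_pos (hgsum k) (fun y => (hg_pos k y).le) (Classical.arbitrary _)
      (hg_pos k _)
  obtain ⟨hwps, hwpt⟩ := McD.tsum_pi_prod K Y g (fun k y => (hg_pos k y).le) hgsum
  have hZprod : Z = ∏ k, ∑' y, g k y := by
    rw [hZ, tsum_congr hwprod]
    exact hwpt
  have hZpos : 0 < Z := by
    rw [hZprod]; exact Finset.prod_pos fun k _ => hZk_pos k
  -- normalized weights
  set q : ∀ k, Y k → ℝ := fun k y => g k y / (∑' y', g k y') with hqdef
  have hq0 : ∀ k y, 0 ≤ q k y := fun k y => div_nonneg (hg_pos k y).le (hZk_pos k).le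
  have hqs : ∀ k, Summable (q k) := fun k => (hgsum k).div_const _
  have hq1 : ∀ k, (∑' y, q k y) = 1 := fun k => by
    rw [hqdef]
    simp only
    rw [tsum_div_const, div_self (ne_of_gt (hZk_pos k))]
  have hpq : ∀ x, p x = ∏ k, q k (x k) := by
    intro x
    rw [hp, hwprod, hZprod, ← Finset.prod_div_distrib]
  have hp0 : ∀ x, 0 ≤ p x := fun x => by
    rw [hpq]; exact Finset.prod_nonneg fun k _ => hq0 k _
  have hpsum : Summable p := (hwsum.div_const Z).congr fun x => (hp x).symm
  have hp1 : (∑' x, p x) = 1 := by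
    rw [tsum_congr hp, tsum_div_const, ← hZ, div_self (ne_of_gt hZpos)]
  -- Lipschitz consequences
  set Mr : ℝ := ∑ k, ((Nat.choose (n k) 2 : ℝ)) with hMrdef
  have hMr1 : (1:ℝ) ≤ Mr := by
    rw [hMrdef]
    exact_mod_cast hM
  have hMr_pos : 0 < Mr := lt_of_lt_of_le one_pos hMr1
  have hcard_le : ∀ (x y : Cfg0 K n V) (k : Fin K),
      ((Finset.univ.filter (fun e => x k e ≠ y k e)).card : ℝ) ≤ ((m k : ℕ) : ℝ) := by
    intro x y k
    have h1 : (Finset.univ.filter (fun e => x k e ≠ y k e)).card ≤ m k := by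
      calc (Finset.univ.filter (fun e => x k e ≠ y k e)).card
          ≤ Finset.univ.card := Finset.card_filter_le _ _
        _ = m k := by simp [hmdef]
    exact_mod_cast h1
  have hosc_glob : ∀ x y, |f x - f y| ≤ L * Mr := by
    intro x y
    refine (hf x y).trans ?_
    apply mul_le_mul_of_nonneg_left _ hL.le
    exact Finset.sum_le_sum fun k _ => hcard_le x y k
  have hfb : ∀ x, |f x| ≤ |f x₀| + L * Mr := fun x => by
    calc |f x| = |f x - f x₀ + f x₀| := by ring_nf
      _ ≤ |f x - f x₀| + |f x₀| := abs_add_le _ _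
      _ ≤ L * Mr + |f x₀| := add_le_add (hosc_glob x x₀) le_rfl
      _ = |f x₀| + L * Mr := by ring
  have hsumpf : Summable fun x => p x * f x := McD.summable_mul_bounded hp0 hpsum hfb
  refine ⟨⟨|f x₀| + L * Mr, hfb⟩, hsumpf, ?_⟩
  -- the concentration bound
  intro t ht
  set c : Fin K → ℝ := fun k => L * ((m k : ℕ) : ℝ) with hcdef
  have hc0 : ∀ k, 0 ≤ c k := fun k => mul_nonneg hL.le (Nat.cast_nonneg _)
  have hfupd : ∀ (x : Cfg0 K n V) k y, |f x - f (Function.update x k y)| ≤ c k := by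
    intro x k y
    refine (hf x (Function.update x k y)).trans ?_
    apply mul_le_mul_of_nonneg_left _ hL.le
    rw [Finset.sum_eq_single k]
    · exact hcard_le _ _ k
    · intro j _ hjk
      have h1 : Function.update x k y j = x j := Function.update_of_ne hjk _ _
      rw [h1]
      simp
    · intro h; exact absurd (Finset.mem_univ k) h
  set μ : ℝ := ∑' y, p y * f y with hμdef
  set V' : ℝ := ∑ k, c k ^ 2 with hV'def
  have hN1 : 1 ≤ N := by
    obtain ⟨k, hk⟩ := hNmem
    rw [← hk]; exact hn k
  have hm_le : ∀ k, ((m k : ℕ) : ℝ) ≤ ((N : ℝ)) ^ 4 := by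
    intro k
    have h1 : m k ≤ N ^ 4 := by
      calc m k = Nat.choose (n k) 2 := rfl
        _ = n k * (n k - 1) / 2 := Nat.choose_two_right _
        _ ≤ n k * (n k - 1) := Nat.div_le_self _ _
        _ ≤ n k * n k := Nat.mul_le_mul_left _ (Nat.sub_le _ _)
        _ = n k ^ 2 := (sq (n k)).symm
        _ ≤ N ^ 2 := Nat.pow_le_pow_left (hNub k) 2
        _ ≤ N ^ 4 := Nat.pow_le_pow_right hN1 (by norm_num)
    exact_mod_cast h1
  have hV'_le : V' ≤ L ^ 2 * Mr * (N : ℝ) ^ 4 := by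
    rw [hV'def, hMrdef]
    calc (∑ k, c k ^ 2) ≤ ∑ k, L ^ 2 * (((m k : ℕ) : ℝ) * (N : ℝ) ^ 4) := by
          apply Finset.sum_le_sum
          intro k _
          rw [hcdef]
          simp only
          rw [mul_pow]
          apply mul_le_mul_of_nonneg_left _ (sq_nonneg L)
          rw [sq]
          exact mul_le_mul_of_nonneg_left (hm_le k) (Nat.cast_nonneg _)
      _ = L ^ 2 * (∑ k, ((Nat.choose (n k) 2 : ℝ))) * (N : ℝ) ^ 4 := by
          rw [← Finset.mul_sum, ← Finset.sum_mul]
          ring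
  have hV'_pos : 0 < V' := by
    obtain ⟨k₁, hk₁⟩ : ∃ k, 1 ≤ m k := by
      by_contra h
      push_neg at h
      have h0 : Finset.univ.sum m = 0 :=
        Finset.sum_eq_zero fun k _ => Nat.lt_one_iff.mp (h k)
      omega
    have h1 : (0:ℝ) < c k₁ ^ 2 := by
      have : (0:ℝ) < ((m k₁ : ℕ) : ℝ) := by exact_mod_cast hk₁
      rw [hcdef]
      positivity
    rw [hV'def]
    exact lt_of_lt_of_le h1
      (Finset.single_le_sum (fun k _ => sq_nonneg (c k)) (Finset.mem_univ k₁))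
  -- mgf bound via tensorization
  have hpinner : (∑' z : Cfg0 K n V, (∏ k, q k (z k)) * f z) = μ :=
    tsum_congr fun z => by rw [← hpq z]
  have hmgf : ∀ l : ℝ, (∑' x, p x * Real.exp (l * (f x - μ))) ≤ Real.exp (l ^ 2 * V' / 2) := by
    intro l
    have T := McD.tensor K Y q hq0 hqs hq1 f c hc0 hfupd l
    rw [hpinner] at T
    calc (∑' x, p x * Real.exp (l * (f x - μ)))
        = ∑' x, (∏ k, q k (x k)) * Real.exp (l * (f x - μ)) :=
          tsum_congr fun x => by rw [hpq x]
      _ ≤ Real.exp (l ^ 2 * V' / 2) := T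
  -- Chernoff bound for a one-sided event
  have hdev : ∀ x, |f x - μ| ≤ L * Mr := fun x =>
    McD.mean_dev hp0 hpsum hp1 hosc_glob hsumpf x
  have key : ∀ (l : ℝ) (S : Set (Cfg0 K n V)), (∀ x ∈ S, t ^ 2 / V' ≤ l * (f x - μ)) →
      (∑' x, S.indicator p x) ≤ Real.exp (l ^ 2 * V' / 2 - t ^ 2 / V') := by
    intro l S hS
    have hBnd : ∀ x, |Real.exp (l * (f x - μ))| ≤ Real.exp (|l| * (L * Mr)) := by
      intro x
      rw [abs_of_pos (Real.exp_pos _)]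
      apply Real.exp_le_exp.mpr
      calc l * (f x - μ) ≤ |l * (f x - μ)| := le_abs_self _
        _ = |l| * |f x - μ| := abs_mul _ _
        _ ≤ |l| * (L * Mr) := mul_le_mul_of_nonneg_left (hdev x) (abs_nonneg _)
    have hsum_exp : Summable fun x => p x * Real.exp (l * (f x - μ)) :=
      McD.summable_mul_bounded hp0 hpsum hBnd
    have hptw : ∀ x, S.indicator p x
        ≤ (p x * Real.exp (l * (f x - μ))) * Real.exp (-(t ^ 2 / V')) := by
      intro x
      by_cases hx : x ∈ S
      · rw [Set.indicator_of_mem hx]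
        have h1 : 1 ≤ Real.exp (l * (f x - μ) - t ^ 2 / V') :=
          Real.one_le_exp (by linarith [hS x hx])
        calc p x = p x * 1 := (mul_one _).symm
          _ ≤ p x * Real.exp (l * (f x - μ) - t ^ 2 / V') :=
            mul_le_mul_of_nonneg_left h1 (hp0 x)
          _ = (p x * Real.exp (l * (f x - μ))) * Real.exp (-(t ^ 2 / V')) := by
            rw [show l * (f x - μ) - t ^ 2 / V' = l * (f x - μ) + -(t ^ 2 / V') by ring,
              Real.exp_add]
            ring
      · rw [Set.indicator_of_notMem hx]
        exact mul_nonneg (mul_nonneg (hp0 x) (Real.exp_pos _).le) (Real.exp_pos _).le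
    calc (∑' x, S.indicator p x)
        ≤ ∑' x, (p x * Real.exp (l * (f x - μ))) * Real.exp (-(t ^ 2 / V')) :=
          Summable.tsum_le_tsum hptw (hpsum.indicator S) (hsum_exp.mul_right _)
      _ = (∑' x, p x * Real.exp (l * (f x - μ))) * Real.exp (-(t ^ 2 / V')) :=
          tsum_mul_right
      _ ≤ Real.exp (l ^ 2 * V' / 2) * Real.exp (-(t ^ 2 / V')) :=
          mul_le_mul_of_nonneg_right (hmgf l) (Real.exp_pos _).le
      _ = Real.exp (l ^ 2 * V' / 2 - t ^ 2 / V') := by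
          rw [← Real.exp_add]; ring_nf
  -- the two tails
  set A : Set (Cfg0 K n V) := {x | t ≤ f x - μ} with hAdef
  set B : Set (Cfg0 K n V) := {x | f x - μ ≤ -t} with hBdef
  have hexp_eq : (t / V') ^ 2 * V' / 2 - t ^ 2 / V' = -(t ^ 2) / (2 * V') := by
    field_simp
    ring
  have hA : (∑' x, A.indicator p x) ≤ Real.exp (-(t ^ 2) / (2 * V')) := by
    rw [← hexp_eq]
    apply key (t / V') A
    intro x hx
    have hx' : t ≤ f x - μ := hx
    calc t ^ 2 / V' = (t / V') * t := by field_simp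
      _ ≤ (t / V') * (f x - μ) :=
        mul_le_mul_of_nonneg_left hx' (div_nonneg ht.le hV'_pos.le)
  have hB : (∑' x, B.indicator p x) ≤ Real.exp (-(t ^ 2) / (2 * V')) := by
    rw [← hexp_eq]
    have hsq : (-(t / V')) ^ 2 = (t / V') ^ 2 := by ring
    rw [← hsq]
    apply key (-(t / V')) B
    intro x hx
    have hx' : f x - μ ≤ -t := hx
    calc t ^ 2 / V' = (t / V') * t := by field_simp
      _ ≤ (t / V') * (-(f x - μ)) := by
        apply mul_le_mul_of_nonneg_left _ (div_nonneg ht.le hV'_pos.le)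
        linarith
      _ = -(t / V') * (f x - μ) := by ring
  set T : Set (Cfg0 K n V) := {x | t ≤ |f x - μ|} with hTdef
  have hTsub : ∀ x, T.indicator p x ≤ A.indicator p x + B.indicator p x := by
    intro x
    have hA0 : 0 ≤ A.indicator p x := Set.indicator_nonneg (fun y _ => hp0 y) x
    have hB0 : 0 ≤ B.indicator p x := Set.indicator_nonneg (fun y _ => hp0 y) x
    by_cases hx : x ∈ T
    · rw [Set.indicator_of_mem hx]
      have habs : t ≤ |f x - μ| := hx
      rcases le_or_gt t (f x - μ) with h | h
      · have hxA : x ∈ A := h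
        rw [Set.indicator_of_mem hxA]
        linarith
      · have hxB : x ∈ B := by
          rcases abs_cases (f x - μ) with ⟨he, _⟩ | ⟨he, _⟩
          · rw [he] at habs; linarith
          · rw [he] at habs
            show f x - μ ≤ -t
            linarith
        rw [Set.indicator_of_mem hxB]
        linarith
    · rw [Set.indicator_of_notMem hx]
      linarith
  have hgoal1 : (∑' x : T, p x) ≤ 2 * Real.exp (-(t ^ 2) / (2 * V')) := by
    rw [tsum_subtype T p]
    calc (∑' x, T.indicator p x)
        ≤ ∑' x, (A.indicator p x + B.indicator p x) :=
          Summable.tsum_le_tsum hTsub (hpsum.indicator T)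
            ((hpsum.indicator A).add (hpsum.indicator B))
      _ = (∑' x, A.indicator p x) + ∑' x, B.indicator p x :=
          Summable.tsum_add (hpsum.indicator A) (hpsum.indicator B)
      _ ≤ Real.exp (-(t ^ 2) / (2 * V')) + Real.exp (-(t ^ 2) / (2 * V')) :=
          add_le_add hA hB
      _ = 2 * Real.exp (-(t ^ 2) / (2 * V')) := by ring
  have hfinal : 2 * Real.exp (-(t ^ 2) / (2 * V'))
      ≤ 2 * Real.exp (-(t ^ 2) / (2 * L ^ 2 * Mr * (N : ℝ) ^ 4)) := by
    apply mul_le_mul_of_nonneg_left _ (by norm_num)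
    apply Real.exp_le_exp.mpr
    have h2V : 0 < 2 * V' := by linarith
    have hle : 2 * V' ≤ 2 * L ^ 2 * Mr * (N : ℝ) ^ 4 := by linarith
    have := div_le_div_of_nonneg_left (sq_nonneg t) h2V hle
    rw [neg_div, neg_div]
    linarith
  exact le_trans hgoal1 hfinal
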